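/- Let X be a Banach space and F ⊆ B_{X*} a weak* compact set that is c-norming for some c > 0. If there exist three distinct elements x₀*, x₁*, x₂* ∈ F such that ‖x₀* − (1/2)(x₁* + x₂*)‖ < c, then the evaluation operator T : X → C(F) is not surjective (i.e., F is not free). -/

import Mathlib

/-- If `F ⊆ B_{X*}` is weak* compact and `c`-norming and contains a
"forbidden `c`-triple", i.e. distinct `x₀*, x₁*, x₂* ∈ F` with
`‖x₀* − (1/2)(x₁* + x₂*)‖ < c`, then the evaluation operator `T : X → C(F)` is not
surjective (`F` is not free). -/
theorem stmt1
    (X : Type*) [NormedAddCommGroup X] [NormedSpace ℝ X]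
    (F : Set (WeakDual ℝ X)) [CompactSpace F]
    (hFball : ∀ f ∈ F, ‖WeakDual.toStrongDual f‖ ≤ 1)
    (T : X →L[ℝ] C(F, ℝ))
    (hT : ∀ (x : X) (f : F), T x f = (f : WeakDual ℝ X) x)
    (c : ℝ) (hc0 : 0 < c)
    (hinj : Function.Injective T)
    (hclosed : IsClosed (Set.range T))
    (hinv : ∃ M : ℝ, M < 1 / c ∧ ∀ x : X, ‖x‖ ≤ M * ‖T x‖)
    (x₀ x₁ x₂ : WeakDual ℝ X)
    (h₀ : x₀ ∈ F) (h₁ : x₁ ∈ F) (h₂ : x₂ ∈ F)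
    (hne01 : x₀ ≠ x₁) (hne02 : x₀ ≠ x₂) (hne12 : x₁ ≠ x₂)
    (htriple : ‖WeakDual.toStrongDual (x₀ - (1 / 2 : ℝ) • (x₁ + x₂))‖ < c) :
    ¬ Function.Surjective T := by
  intro hsurj
  obtain ⟨M, hM, hMx⟩ := hinv
  set p₀ : F := ⟨x₀, h₀⟩
  set p₁ : F := ⟨x₁, h₁⟩
  set p₂ : F := ⟨x₂, h₂⟩
  -- Urysohn: g = 0 on {p₁, p₂}, g = 1 at p₀, values in [0,1]
  have hsclosed : IsClosed ({p₁, p₂} : Set F) := (Set.toFinite _).isClosed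
  have htclosed : IsClosed ({p₀} : Set F) := isClosed_singleton
  have hdisj : Disjoint ({p₁, p₂} : Set F) ({p₀} : Set F) := by
    simp only [Set.disjoint_singleton_right, Set.mem_insert_iff, Set.mem_singleton_iff]
    push_neg
    constructor
    · intro h; exact hne01 (congrArg Subtype.val h)
    · intro h; exact hne02 (congrArg Subtype.val h)
  obtain ⟨g, hg0, hg1, hgIcc⟩ := exists_continuous_zero_one_of_isClosed hsclosed htclosed hdisj
  have hg₀ : g p₀ = 1 := hg1 rfl
  have hg₁ : g p₁ = 0 := hg0 (by simp)
  have hg₂ : g p₂ = 0 := hg0 (by simp)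
  have hgnorm : ‖g‖ ≤ 1 := by
    apply ContinuousMap.norm_le _ zero_le_one |>.2
    intro q
    have := hgIcc q
    rw [Real.norm_eq_abs, abs_le]
    exact ⟨by linarith [this.1], this.2⟩
  obtain ⟨x, hx⟩ := hsurj g
  have hx₀ : x₀ x = 1 := by rw [← hT x p₀, hx, hg₀]
  have hx₁ : x₁ x = 0 := by rw [← hT x p₁, hx, hg₁]
  have hx₂ : x₂ x = 0 := by rw [← hT x p₂, hx, hg₂]
  have hxle : ‖x‖ ≤ M * ‖g‖ := by simpa [hx] using hMx x
  have hgpos : (0:ℝ) < ‖g‖ := by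
    rcases eq_or_lt_of_le (norm_nonneg g) with h | h
    · exfalso
      have : g = 0 := by rwa [eq_comm, norm_eq_zero] at h
      rw [this] at hg₀; simp at hg₀
    · exact h
  have hMnonneg : 0 ≤ M := by
    nlinarith [norm_nonneg x]
  have hxM : ‖x‖ < 1 / c := by
    calc ‖x‖ ≤ M * ‖g‖ := hxle
    _ ≤ M * 1 := by nlinarith
    _ = M := mul_one M
    _ < 1 / c := hM
  set φ := WeakDual.toStrongDual (x₀ - (1 / 2 : ℝ) • (x₁ + x₂))
  have hφx : φ x = 1 := by
    have : φ x = x₀ x - (1/2 : ℝ) * (x₁ x + x₂ x) := rfl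
    rw [this, hx₀, hx₁, hx₂]; ring
  have hle := φ.le_opNorm x
  rw [hφx] at hle
  have : ‖φ‖ * ‖x‖ < c * (1 / c) := by
    rcases eq_or_lt_of_le (norm_nonneg φ) with h | h
    · rw [← h, zero_mul]; positivity
    · exact mul_lt_mul'' htriple hxM (le_of_lt h) (norm_nonneg x)
  rw [mul_one_div, div_self (ne_of_gt hc0)] at this
  simp at hle
  linarith
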